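/- The operator norm of K satisfies ‖K‖ ≤ τ₂; equivalently, for every u ∈ C([0,1],ℝ) and every t ∈ [0,1], |(Ku)(t)| ≤ τ₂·‖u‖∞. -/

import Mathlib

open MeasureTheory Set Filter

noncomputable def G (α t s : ℝ) : ℝ :=
  if s ≤ t then (t * (1 - s) ^ (α - 1) - (t - s) ^ (α - 1)) / Real.Gamma α
  else t * (1 - s) ^ (α - 1) / Real.Gamma α

noncomputable def Psi (α s : ℝ) : ℝ := (1 - s) ^ (α - 1) / Real.Gamma α

lemma G_eq (α : ℝ) (hα : 2 < α) (t s : ℝ) :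
    G α t s = (t * (1 - s) ^ (α - 1) - (max (t - s) 0) ^ (α - 1)) / Real.Gamma α := by
  rw [G]
  split_ifs with h
  · rw [max_eq_left (by linarith)]
  · rw [max_eq_right (by linarith), Real.zero_rpow (by linarith), sub_zero]

lemma G_cont (α : ℝ) (hα : 2 < α) : Continuous fun p : ℝ × ℝ => G α p.1 p.2 := by
  have h : (fun p : ℝ × ℝ => G α p.1 p.2)
      = fun p : ℝ × ℝ => (p.1 * (1 - p.2) ^ (α - 1) - (max (p.1 - p.2) 0) ^ (α - 1)) / Real.Gamma α := by
    funext p; exact G_eq α hα p.1 p.2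
  rw [h]
  apply Continuous.div_const
  apply Continuous.sub
  · exact continuous_fst.mul ((continuous_const.sub continuous_snd).rpow_const
      (fun x => Or.inr (by linarith)))
  · exact ((continuous_fst.sub continuous_snd).max continuous_const).rpow_const
      (fun x => Or.inr (by linarith))

lemma G_nonneg (α t s : ℝ) (hα : 2 < α) (ht : t ∈ Icc (0:ℝ) 1) (hs : s ∈ Icc (0:ℝ) 1) :
    0 ≤ G α t s := by
  obtain ⟨ht0, ht1⟩ := ht
  obtain ⟨hs0, hs1⟩ := hs
  have hΓ : 0 < Real.Gamma α := Real.Gamma_pos_of_pos (by linarith)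
  rw [G]
  split_ifs with h
  · apply div_nonneg _ hΓ.le
    have key : (t - s) ^ (α - 1) ≤ t * (1 - s) ^ (α - 1) := by
      have h1 : (t - s) ^ (α - 1) ≤ (t * (1 - s)) ^ (α - 1) :=
        Real.rpow_le_rpow (by linarith) (by nlinarith) (by linarith)
      have h2 : (t * (1 - s)) ^ (α - 1) = t ^ (α - 1) * (1 - s) ^ (α - 1) :=
        Real.mul_rpow ht0 (by linarith)
      have h3 : t ^ (α - 1) ≤ t := by
        rcases eq_or_lt_of_le ht0 with h0 | h0
        · rw [← h0, Real.zero_rpow (by linarith)]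
        · calc t ^ (α - 1) ≤ t ^ (1:ℝ) :=
                Real.rpow_le_rpow_of_exponent_ge h0 ht1 (by linarith)
            _ = t := Real.rpow_one t
      calc (t - s) ^ (α - 1) ≤ t ^ (α - 1) * (1 - s) ^ (α - 1) := by rw [← h2]; exact h1
        _ ≤ t * (1 - s) ^ (α - 1) :=
            mul_le_mul_of_nonneg_right h3 (Real.rpow_nonneg (by linarith) _)
    linarith
  · exact div_nonneg (mul_nonneg ht0 (Real.rpow_nonneg (by linarith) _)) hΓ.le

lemma G_le_Psi (α t s : ℝ) (hα : 2 < α) (ht : t ∈ Icc (0:ℝ) 1) (hs : s ∈ Icc (0:ℝ) 1) :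
    G α t s ≤ Psi α s := by
  obtain ⟨ht0, ht1⟩ := ht
  obtain ⟨hs0, hs1⟩ := hs
  have hΓ : 0 < Real.Gamma α := Real.Gamma_pos_of_pos (by linarith)
  have hr : 0 ≤ (1 - s) ^ (α - 1) := Real.rpow_nonneg (by linarith) _
  rw [G, Psi]
  split_ifs with h
  · have h2 : 0 ≤ (t - s) ^ (α - 1) := Real.rpow_nonneg (by linarith) _
    apply div_le_div_of_nonneg_right ?_ hΓ.le
    nlinarith
  · apply div_le_div_of_nonneg_right ?_ hΓ.le
    nlinarith

lemma Psi_le (α s : ℝ) (hα : 2 < α) (hs : s ∈ Icc (0:ℝ) 1) :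
    Psi α s ≤ 1 / Real.Gamma α := by
  have hΓ : 0 < Real.Gamma α := Real.Gamma_pos_of_pos (by linarith)
  apply div_le_div_of_nonneg_right ?_ hΓ.le
  exact Real.rpow_le_one (by linarith [hs.2]) (by linarith [hs.1]) (by linarith)

lemma Psi_nonneg (α s : ℝ) (hα : 2 < α) (hs : s ∈ Icc (0:ℝ) 1) : 0 ≤ Psi α s := by
  have hΓ : 0 < Real.Gamma α := Real.Gamma_pos_of_pos (by linarith)
  exact div_nonneg (Real.rpow_nonneg (by linarith [hs.2]) _) hΓ.le


/-- Integral of `f` over `[0,1]` against the finite signed measure `ν`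
(via its Jordan decomposition). -/
noncomputable def stInt (ν : MeasureTheory.SignedMeasure ℝ) (f : ℝ → ℝ) : ℝ :=
  ∫ t in Icc (0:ℝ) 1, f t ∂ν.toJordanDecomposition.posPart
    - ∫ t in Icc (0:ℝ) 1, f t ∂ν.toJordanDecomposition.negPart

noncomputable def gA (α : ℝ) (ν : MeasureTheory.SignedMeasure ℝ) (s : ℝ) : ℝ :=
  stInt ν (fun t => G α t s)

noncomputable def Lam (η μ₀ β : ℝ) (ν : MeasureTheory.SignedMeasure ℝ) : ℝ :=
  μ₀ * η + β * stInt ν (fun t => t)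

noncomputable def Hker (α η μ₀ β : ℝ) (ν : MeasureTheory.SignedMeasure ℝ) (t s : ℝ) : ℝ :=
  β * t / (1 - Lam η μ₀ β ν) * gA α ν s
    + μ₀ * t / (1 - Lam η μ₀ β ν) * G α η s + G α t s

noncomputable def Phi (α η μ₀ β : ℝ) (ν : MeasureTheory.SignedMeasure ℝ) (s : ℝ) : ℝ :=
  β / (1 - Lam η μ₀ β ν) * gA α ν s
    + (μ₀ - Lam η μ₀ β ν + 1) / (1 - Lam η μ₀ β ν) * Psi α s

noncomputable def rho (α η t : ℝ) : ℝ := (η - η ^ (α - 1)) * (t - t ^ (α - 1))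

noncomputable def tau1 (α η μ₀ β : ℝ) (ν : MeasureTheory.SignedMeasure ℝ) : ℝ :=
  ∫ s in Icc (0:ℝ) 1, rho α η s * Phi α η μ₀ β ν s

noncomputable def tau2 (α η μ₀ β : ℝ) (ν : MeasureTheory.SignedMeasure ℝ) : ℝ :=
  ∫ s in Icc (0:ℝ) 1, Phi α η μ₀ β ν s

-- measurability of gA
lemma gA_meas (α : ℝ) (hα : 2 < α) (ν : MeasureTheory.SignedMeasure ℝ) :
    StronglyMeasurable (gA α ν) := by
  have hc : StronglyMeasurable (fun p : ℝ × ℝ => G α p.2 p.1) :=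
    ((G_cont α hα).comp continuous_swap).stronglyMeasurable
  have h1 : StronglyMeasurable fun s => ∫ t in Icc (0:ℝ) 1, G α t s
      ∂ν.toJordanDecomposition.posPart := hc.integral_prod_right'
  have h2 : StronglyMeasurable fun s => ∫ t in Icc (0:ℝ) 1, G α t s
      ∂ν.toJordanDecomposition.negPart := hc.integral_prod_right'
  exact h1.sub h2

-- bound on gA
lemma gA_bound (α : ℝ) (hα : 2 < α) (ν : MeasureTheory.SignedMeasure ℝ) (s : ℝ)
    (hs : s ∈ Icc (0:ℝ) 1) :
    |gA α ν s| ≤ ((ν.toJordanDecomposition.posPart (Icc (0:ℝ) 1)).toReal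
      + (ν.toJordanDecomposition.negPart (Icc (0:ℝ) 1)).toReal) / Real.Gamma α := by
  have hΓ : 0 < Real.Gamma α := Real.Gamma_pos_of_pos (by linarith)
  have key : ∀ μ : Measure ℝ, IsFiniteMeasure μ →
      |∫ t in Icc (0:ℝ) 1, G α t s ∂μ| ≤ (μ (Icc (0:ℝ) 1)).toReal / Real.Gamma α := by
    intro μ hfin
    have h := MeasureTheory.norm_integral_le_of_norm_le_const (μ := μ.restrict (Icc (0:ℝ) 1))
      (f := fun t => G α t s) (C := 1 / Real.Gamma α) ?_
    · rw [Real.norm_eq_abs] at h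
      rw [Measure.real, Measure.restrict_apply_univ] at h
      calc |∫ t in Icc (0:ℝ) 1, G α t s ∂μ| ≤ 1 / Real.Gamma α * (μ (Icc (0:ℝ) 1)).toReal := h
        _ = (μ (Icc (0:ℝ) 1)).toReal / Real.Gamma α := by ring
    · filter_upwards [ae_restrict_mem measurableSet_Icc] with t ht
      rw [Real.norm_eq_abs, abs_of_nonneg (G_nonneg α t s hα ht hs)]
      calc G α t s ≤ Psi α s := G_le_Psi α t s hα ht hs
        _ ≤ 1 / Real.Gamma α := Psi_le α s hα hs
  have k1 := key ν.toJordanDecomposition.posPart inferInstance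
  have k2 := key ν.toJordanDecomposition.negPart inferInstance
  rw [gA, stInt]
  calc |(∫ t in Icc (0:ℝ) 1, G α t s ∂ν.toJordanDecomposition.posPart)
        - ∫ t in Icc (0:ℝ) 1, G α t s ∂ν.toJordanDecomposition.negPart|
      ≤ |∫ t in Icc (0:ℝ) 1, G α t s ∂ν.toJordanDecomposition.posPart|
        + |∫ t in Icc (0:ℝ) 1, G α t s ∂ν.toJordanDecomposition.negPart| := abs_sub _ _
    _ ≤ _ := by
        rw [add_div]
        exact add_le_add (k1 ..) (k2 ..)

/-- `‖K‖ ≤ τ₂`: for every continuous `u` on `[0,1]` and every `t ∈ [0,1]`,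
`|(Ku)(t)| ≤ τ₂ · ‖u‖∞`. -/
theorem opNorm_K_le_tau2 (α η μ₀ β : ℝ) (ν : MeasureTheory.SignedMeasure ℝ)
    (hα₁ : 2 < α) (hα₂ : α ≤ 3) (hη : η ∈ Ioo (0:ℝ) 1) (hμ : 0 ≤ μ₀) (hβ : 0 ≤ β)
    (hΛ₀ : 0 ≤ Lam η μ₀ β ν) (hΛ₁ : Lam η μ₀ β ν < 1)
    (hgA : ∀ s ∈ Icc (0:ℝ) 1, 0 ≤ gA α ν s)
    (u : ℝ → ℝ) (hu : ContinuousOn u (Icc (0:ℝ) 1)) :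
    ∀ t ∈ Icc (0:ℝ) 1,
      |∫ s in Icc (0:ℝ) 1, Hker α η μ₀ β ν t s * u s|
        ≤ tau2 α η μ₀ β ν * ⨆ s : Icc (0:ℝ) 1, |u s| := by
  
  intro t ht
  have hΓ : 0 < Real.Gamma α := Real.Gamma_pos_of_pos (by linarith)
  have hD : 0 < 1 - Lam η μ₀ β ν := by linarith
  have hηI : η ∈ Icc (0:ℝ) 1 := ⟨hη.1.le, hη.2.le⟩
  -- bound M on u
  obtain ⟨C, hC⟩ := isCompact_Icc.exists_bound_of_continuousOn hu
  have hbdd : BddAbove (Set.range fun s : Icc (0:ℝ) 1 => |u ↑s|) := by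
    refine ⟨C, ?_⟩
    rintro x ⟨s, rfl⟩
    exact hC s s.2
  set M := ⨆ s : Icc (0:ℝ) 1, |u ↑s| with hM
  have huM : ∀ s ∈ Icc (0:ℝ) 1, |u s| ≤ M := fun s hs =>
    le_ciSup hbdd (⟨s, hs⟩ : Icc (0:ℝ) 1)
  have hM0 : 0 ≤ M := le_trans (abs_nonneg _) (huM 0 ⟨le_refl _, by norm_num⟩)
  -- pointwise bounds on Hker and Phi
  have hHb : ∀ s ∈ Icc (0:ℝ) 1, 0 ≤ Hker α η μ₀ β ν t s ∧
      Hker α η μ₀ β ν t s ≤ Phi α η μ₀ β ν s := by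
    intro s hs
    have hg := hgA s hs
    have hGts0 := G_nonneg α t s hα₁ ht hs
    have hGηs0 := G_nonneg α η s hα₁ hηI hs
    have hGts := G_le_Psi α t s hα₁ ht hs
    have hGηs := G_le_Psi α η s hα₁ hηI hs
    have hpsi := Psi_nonneg α s hα₁ hs
    constructor
    · rw [Hker]
      have c1 : 0 ≤ β * t / (1 - Lam η μ₀ β ν) :=
        div_nonneg (mul_nonneg hβ ht.1) hD.le
      have c2 : 0 ≤ μ₀ * t / (1 - Lam η μ₀ β ν) :=
        div_nonneg (mul_nonneg hμ ht.1) hD.le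
      have := mul_nonneg c1 hg
      have := mul_nonneg c2 hGηs0
      linarith
    · rw [Hker, Phi]
      have e1 : β * t / (1 - Lam η μ₀ β ν) * gA α ν s
          ≤ β / (1 - Lam η μ₀ β ν) * gA α ν s := by
        apply mul_le_mul_of_nonneg_right _ hg
        apply div_le_div_of_nonneg_right _ hD.le
        nlinarith [ht.1, ht.2]
      have e2 : μ₀ * t / (1 - Lam η μ₀ β ν) * G α η s
          ≤ μ₀ / (1 - Lam η μ₀ β ν) * Psi α s := by
        apply mul_le_mul
        · apply div_le_div_of_nonneg_right _ hD.le
          nlinarith [ht.1, ht.2]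
        · exact hGηs
        · exact hGηs0
        · exact div_nonneg hμ hD.le
      have e4 : (μ₀ - Lam η μ₀ β ν + 1) / (1 - Lam η μ₀ β ν) * Psi α s
          = μ₀ / (1 - Lam η μ₀ β ν) * Psi α s + Psi α s := by
        field_simp
        ring
      rw [e4]
      linarith
  -- integrability of Phi
  have hPsiInt : IntegrableOn (Psi α) (Icc (0:ℝ) 1) := by
    apply Continuous.integrableOn_Icc
    exact ((continuous_const.sub continuous_id).rpow_const
      (fun x => Or.inr (by linarith))).div_const _
  have hgAInt : IntegrableOn (gA α ν) (Icc (0:ℝ) 1) := by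
    apply Integrable.mono'
      (integrable_const (((ν.toJordanDecomposition.posPart (Icc (0:ℝ) 1)).toReal
        + (ν.toJordanDecomposition.negPart (Icc (0:ℝ) 1)).toReal) / Real.Gamma α))
      (gA_meas α hα₁ ν).aestronglyMeasurable
    filter_upwards [ae_restrict_mem measurableSet_Icc] with s hs
    rw [Real.norm_eq_abs]
    exact gA_bound α hα₁ ν s hs
  have hPhiInt : IntegrableOn (Phi α η μ₀ β ν) (Icc (0:ℝ) 1) := by
    apply Integrable.add
    · exact hgAInt.const_mul _
    · exact hPsiInt.const_mul _
  -- main estimate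
  calc |∫ s in Icc (0:ℝ) 1, Hker α η μ₀ β ν t s * u s|
      ≤ ∫ s in Icc (0:ℝ) 1, |Hker α η μ₀ β ν t s * u s| := by
        simpa only [Real.norm_eq_abs] using
          norm_integral_le_integral_norm (μ := volume.restrict (Icc (0:ℝ) 1))
            (fun s => Hker α η μ₀ β ν t s * u s)
    _ ≤ ∫ s in Icc (0:ℝ) 1, Phi α η μ₀ β ν s * M := by
        apply integral_mono_of_nonneg
        · filter_upwards with s; exact abs_nonneg _
        · exact hPhiInt.mul_const M
        · filter_upwards [ae_restrict_mem measurableSet_Icc] with s hs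
          rw [abs_mul, abs_of_nonneg (hHb s hs).1]
          exact mul_le_mul (hHb s hs).2 (huM s hs) (abs_nonneg _)
            (le_trans (hHb s hs).1 (hHb s hs).2)
    _ = tau2 α η μ₀ β ν * M := by
        rw [tau2, ← integral_mul_const]
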